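/- Let M be a monoidal model category and let α : f_V → f_W and β : f_X → f_Y be morphisms in Arr(M). Suppose α is a cofibration and β is a cofibration (respectively, trivial cofibration) in the projective model structure on Arr(M). Then the 0-component ζ of the pushout product α □₂ β, namely the induced map ζ : (W₁⊗X₀ ⊔_{W₀⊗X₀} W₀⊗X₁) ⊔_{(V₁⊗X₀ ⊔_{V₀⊗X₀} V₀⊗X₁)} (V₁⊗Y₀ ⊔_{V₀⊗Y₀} V₀⊗Y₁) → W₁⊗Y₀ ⊔_{W₀⊗Y₀} W₀⊗Y₁, is a cofibration (respectively, trivial cofibration) in M. The same conclusion, with 'trivial' attached when α is a trivial cofibration, holds when α is a (trivial) cofibration and β is a cofibration. -/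

import Mathlib

set_option maxHeartbeats 1000000

open CategoryTheory Category Limits MonoidalCategory

universe v u

namespace ArrowPaper

variable {M : Type u} [Category.{v} M]

/-- `f` is a retract of `g` in the arrow category. -/
def IsRetractOf (f g : Arrow M) : Prop :=
  ∃ (i : f ⟶ g) (r : g ⟶ f), i ≫ r = 𝟙 f

/-- A (Quillen) model structure on a category: three classes of maps
(weak equivalences, cofibrations, fibrations) satisfying the two-out-of-three
axiom, closure under retracts, the lifting axioms, and the factorization axioms. -/
structure ModelStructure (M : Type u) [Category.{v} M] where
  /-- weak equivalences -/
  W : MorphismProperty M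
  /-- cofibrations -/
  Cof : MorphismProperty M
  /-- fibrations -/
  Fib : MorphismProperty M
  w_comp : ∀ {X Y Z : M} (f : X ⟶ Y) (g : Y ⟶ Z), W f → W g → W (f ≫ g)
  w_cancel_left : ∀ {X Y Z : M} (f : X ⟶ Y) (g : Y ⟶ Z), W f → W (f ≫ g) → W g
  w_cancel_right : ∀ {X Y Z : M} (f : X ⟶ Y) (g : Y ⟶ Z), W g → W (f ≫ g) → W f
  w_retract : ∀ (f g : Arrow M), IsRetractOf f g → W g.hom → W f.hom
  cof_retract : ∀ (f g : Arrow M), IsRetractOf f g → Cof g.hom → Cof f.hom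
  fib_retract : ∀ (f g : Arrow M), IsRetractOf f g → Fib g.hom → Fib f.hom
  lift_trivCof_fib : ∀ {A B X Y : M} (i : A ⟶ B) (p : X ⟶ Y),
    Cof i → W i → Fib p → HasLiftingProperty i p
  lift_cof_trivFib : ∀ {A B X Y : M} (i : A ⟶ B) (p : X ⟶ Y),
    Cof i → Fib p → W p → HasLiftingProperty i p
  factor_trivCof_fib : ∀ {X Y : M} (f : X ⟶ Y),
    ∃ (Z : M) (i : X ⟶ Z) (p : Z ⟶ Y), Cof i ∧ W i ∧ Fib p ∧ i ≫ p = f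
  factor_cof_trivFib : ∀ {X Y : M} (f : X ⟶ Y),
    ∃ (Z : M) (i : X ⟶ Z) (p : Z ⟶ Y), Cof i ∧ Fib p ∧ W p ∧ i ≫ p = f

section Projective

variable [HasPushouts M]

/-- The pushout corner map of a commutative square `α : f ⟶ g` in the arrow category:
the induced map `α₁ ⊛ g : X₁ ⊔_{X₀} Y₀ ⟶ Y₁`. -/
noncomputable def cornerMap {f g : Arrow M} (α : f ⟶ g) :
    pushout f.hom α.left ⟶ g.right :=
  pushout.desc α.right g.hom (Arrow.w α).symm

variable (S : ModelStructure M)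

/-- Projective weak equivalences in the arrow category: componentwise weak equivalences. -/
def ProjW : MorphismProperty (Arrow M) := fun _ _ α => S.W α.left ∧ S.W α.right

/-- Projective fibrations in the arrow category: componentwise fibrations. -/
def ProjFib : MorphismProperty (Arrow M) := fun _ _ α => S.Fib α.left ∧ S.Fib α.right

/-- Projective cofibrations in the arrow category: `α₀` and the pushout corner map
`α₁ ⊛ g` are cofibrations. -/
def ProjCof : MorphismProperty (Arrow M) := fun _ _ α =>
  S.Cof α.left ∧ S.Cof (cornerMap α)

/-- Projective trivial cofibrations in the arrow category: `α₀` and the pushout corner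
map `α₁ ⊛ g` are trivial cofibrations. -/
def ProjTrivCof : MorphismProperty (Arrow M) := fun _ _ α =>
  (S.Cof α.left ∧ S.W α.left) ∧ (S.Cof (cornerMap α) ∧ S.W (cornerMap α))

end Projective

section Monoidal

variable [MonoidalCategory M] [HasPushouts M]

/-- The domain `(X₀ ⊗ Y₁) ⊔_{X₀ ⊗ Y₀} (X₁ ⊗ Y₀)` of the pushout product of two arrows. -/
noncomputable abbrev ppDom (f g : Arrow M) : M :=
  pushout (f.left ◁ g.hom) (f.hom ▷ g.left)

/-- The pushout product `f □ g : (X₀ ⊗ Y₁) ⊔_{X₀ ⊗ Y₀} (X₁ ⊗ Y₀) ⟶ X₁ ⊗ Y₁`. -/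
noncomputable def ppMap (f g : Arrow M) : ppDom f g ⟶ f.right ⊗ g.right :=
  pushout.desc (f.hom ▷ g.right) (f.right ◁ g.hom) (whisker_exchange f.hom g.hom)

/-- The pushout product of two arrows, as an object of the arrow category. -/
noncomputable def ppObj (f g : Arrow M) : Arrow M := Arrow.mk (ppMap f g)

/-- The pushout product axiom for a model structure on a monoidal category:
the pushout product of two cofibrations is a cofibration, which is moreover a weak
equivalence if either of the two cofibrations is a weak equivalence. -/
def PushoutProductAxiom (S : ModelStructure M) : Prop :=
  ∀ (f g : Arrow M), S.Cof f.hom → S.Cof g.hom →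
    S.Cof (ppMap f g) ∧ (S.W f.hom → S.W (ppMap f g)) ∧ (S.W g.hom → S.W (ppMap f g))

end Monoidal

section PP2

variable [MonoidalCategory M] [HasPushouts M]

/-- Functoriality of the pushout product domain in the first variable. -/
noncomputable def ppDomMapL {fV fW : Arrow M} (α : fV ⟶ fW) (g : Arrow M) :
    ppDom fV g ⟶ ppDom fW g :=
  pushout.map _ _ _ _ (α.left ▷ g.right) (α.right ▷ g.left) (α.left ▷ g.left)
    (whisker_exchange α.left g.hom)
    (by rw [← comp_whiskerRight, ← comp_whiskerRight, Arrow.w])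

/-- Functoriality of the pushout product domain in the second variable. -/
noncomputable def ppDomMapR (f : Arrow M) {fX fY : Arrow M} (β : fX ⟶ fY) :
    ppDom f fX ⟶ ppDom f fY :=
  pushout.map _ _ _ _ (f.left ◁ β.right) (f.right ◁ β.left) (f.left ◁ β.left)
    (by rw [← MonoidalCategory.whiskerLeft_comp, ← MonoidalCategory.whiskerLeft_comp, Arrow.w])
    (whisker_exchange f.hom β.left).symm

variable {fV fW fX fY : Arrow M} (α : fV ⟶ fW) (β : fX ⟶ fY)

/-- The object `Z`, i.e. the `0`-component of the domain of `α □₂ β`. -/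
noncomputable abbrev Zobj : M :=
  pushout (ppDomMapR fV β) (ppDomMapL α fX)

/-- The map `ζ`, i.e. the `0`-component of `α □₂ β`. -/
noncomputable def zeta : Zobj α β ⟶ ppDom fW fY :=
  pushout.desc (ppDomMapL α fY) (ppDomMapR fW β) (by
    apply pushout.hom_ext <;>
      (try simp only [ppMap, ppDomMapL, ppDomMapR, pushout.map, pushout.inl_desc_assoc,
        pushout.inr_desc_assoc, pushout.inl_desc, pushout.inr_desc, Category.assoc]) <;>
      simp [ppDomMapL, ppDomMapR, whisker_exchange, whisker_exchange_assoc,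
        ← MonoidalCategory.whiskerLeft_comp, ← comp_whiskerRight, Arrow.w])

/-- The arrow `(f_W □ f_X) ⊔_{f_V □ f_X} (f_V □ f_Y)`, i.e. the domain object of
`α □₂ β` as an object of the arrow category; its `0`-component (domain) is `Z` and its
`1`-component (codomain) is `W₁⊗X₁ ⊔_{V₁⊗X₁} V₁⊗Y₁`. -/
noncomputable def Qmap : Zobj α β ⟶ ppDom (Arrow.mk α.right) (Arrow.mk β.right) :=
  pushout.map _ _ _ _ (ppMap fV fY) (ppMap fW fX) (ppMap fV fX)
    (by
      apply pushout.hom_ext <;>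
        (try simp only [ppMap, ppDomMapL, ppDomMapR, pushout.map, pushout.inl_desc_assoc,
        pushout.inr_desc_assoc, pushout.inl_desc, pushout.inr_desc, Category.assoc]) <;>
      simp [ppDomMapR, ppMap, whisker_exchange, whisker_exchange_assoc,
          ← MonoidalCategory.whiskerLeft_comp, ← comp_whiskerRight, Arrow.w])
    (by
      apply pushout.hom_ext <;>
        (try simp only [ppMap, ppDomMapL, ppDomMapR, pushout.map, pushout.inl_desc_assoc,
        pushout.inr_desc_assoc, pushout.inl_desc, pushout.inr_desc, Category.assoc]) <;>
      simp [ppDomMapL, ppMap, whisker_exchange, whisker_exchange_assoc,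
          ← MonoidalCategory.whiskerLeft_comp, ← comp_whiskerRight, Arrow.w])

/-- The pushout product `α □₂ β` of two composable squares, i.e. the morphism
`(f_W □ f_X) ⊔_{f_V □ f_X} (f_V □ f_Y) ⟶ f_W □ f_Y` in the arrow category, whose
`0`-component is `ζ` and whose `1`-component is `α₁ □ β₁`. -/
noncomputable def pp2 : Arrow.mk (Qmap α β) ⟶ Arrow.mk (ppMap fW fY) :=
  Arrow.homMk (u := zeta α β) (v := ppMap (Arrow.mk α.right) (Arrow.mk β.right)) (by
    apply pushout.hom_ext <;> apply pushout.hom_ext <;>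
      (try simp only [Arrow.mk_hom, Arrow.mk_left, Arrow.mk_right, zeta, Qmap, pushout.map,
        pushout.inl_desc_assoc, pushout.inr_desc_assoc, Category.assoc]) <;>
      (try simp only [ppMap, ppDomMapL, ppDomMapR, pushout.map, pushout.inl_desc_assoc,
        pushout.inr_desc_assoc, pushout.inl_desc, pushout.inr_desc, Category.assoc]) <;>
      simp [zeta, Qmap, ppMap, ppDomMapL, ppDomMapR, whisker_exchange, whisker_exchange_assoc,
        ← MonoidalCategory.whiskerLeft_comp, ← comp_whiskerRight, Arrow.w])

end PP2


section RetractArgument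

variable {M : Type u} [Category.{v} M]

lemma cof_of_llp (S : ModelStructure M) {A B : M} (f : A ⟶ B)
    (h : ∀ {P Q : M} (p : P ⟶ Q), S.Fib p → S.W p → HasLiftingProperty f p) :
    S.Cof f := by
  obtain ⟨Z, i, q, hi, hq, hw, fac⟩ := S.factor_cof_trivFib f
  haveI := h q hq hw
  have sq : CommSq i f q (𝟙 B) := ⟨by rw [comp_id, fac]⟩
  refine S.cof_retract (Arrow.mk f) (Arrow.mk i)
    ⟨Arrow.homMk (u := 𝟙 A) (v := sq.lift) (by simp [sq.fac_left]),
     Arrow.homMk (u := 𝟙 A) (v := q) (by simp [fac]), ?_⟩ hi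
  apply CommaMorphism.ext
  · simp
  · simp [sq.fac_right]

lemma trivCof_of_llp (S : ModelStructure M) {A B : M} (f : A ⟶ B)
    (h : ∀ {P Q : M} (p : P ⟶ Q), S.Fib p → HasLiftingProperty f p) :
    S.Cof f ∧ S.W f := by
  obtain ⟨Z, i, q, hi, hwi, hq, fac⟩ := S.factor_trivCof_fib f
  haveI := h q hq
  have sq : CommSq i f q (𝟙 B) := ⟨by rw [comp_id, fac]⟩
  have hret : IsRetractOf (Arrow.mk f) (Arrow.mk i) :=
    ⟨Arrow.homMk (u := 𝟙 A) (v := sq.lift) (by simp [sq.fac_left]),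
     Arrow.homMk (u := 𝟙 A) (v := q) (by simp [fac]),
     by
      apply CommaMorphism.ext
      · simp
      · simp [sq.fac_right]⟩
  exact ⟨S.cof_retract _ _ hret hi, S.w_retract _ _ hret hwi⟩

end RetractArgument

section WhiskerPushout

variable {M : Type u} [Category.{v} M] [MonoidalCategory M] [SymmetricCategory M]
  [MonoidalClosed M] [HasPushouts M]

lemma tensorRight_preservesColimits (X : M) : PreservesColimits (tensorRight X) :=
  preservesColimits_of_natIso
    (NatIso.ofComponents (fun A => β_ X A) (by intros; simp) :
      tensorLeft X ≅ tensorRight X)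

lemma isPushout_whiskerLeft (A : M) {X Y Z : M} (f : X ⟶ Y) (g : X ⟶ Z) :
    IsPushout (A ◁ f) (A ◁ g) (A ◁ pushout.inl f g) (A ◁ pushout.inr f g) := by
  simpa using (IsPushout.of_hasPushout f g).map (tensorLeft A)

lemma isPushout_whiskerRight {X Y Z : M} (f : X ⟶ Y) (g : X ⟶ Z) (A : M) :
    IsPushout (f ▷ A) (g ▷ A) (pushout.inl f g ▷ A) (pushout.inr f g ▷ A) := by
  haveI := tensorRight_preservesColimits (M := M) A
  simpa using (IsPushout.of_hasPushout f g).map (tensorRight A)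

end WhiskerPushout

section ZetaLLP

variable {M : Type u} [Category.{v} M] [MonoidalCategory M] [HasPushouts M]

/-- First structure inclusion of the pushout-product domain. -/
noncomputable abbrev ppInl (f g : Arrow M) : f.left ⊗ g.right ⟶ ppDom f g :=
  pushout.inl _ _

/-- Second structure inclusion of the pushout-product domain. -/
noncomputable abbrev ppInr (f g : Arrow M) : f.right ⊗ g.left ⟶ ppDom f g :=
  pushout.inr _ _

variable [SymmetricCategory M] [MonoidalClosed M]

lemma zeta_llp {fV fW fX fY : Arrow M} (α : fV ⟶ fW) (β : fX ⟶ fY)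
    {P Q : M} (p : P ⟶ Q)
    (h₁ : HasLiftingProperty (ppMap (Arrow.mk α.left) (Arrow.mk β.left)) p)
    (h₂ : HasLiftingProperty (ppMap (Arrow.mk α.left) (Arrow.mk (cornerMap β))) p)
    (h₃ : HasLiftingProperty (ppMap (Arrow.mk (cornerMap α)) (Arrow.mk β.left)) p) :
    HasLiftingProperty (zeta α β) p := by
  constructor
  intro u v sq
  have hcmp : ppDomMapR fV β ≫ pushout.inl (ppDomMapR fV β) (ppDomMapL α fX) ≫ u
      = ppDomMapL α fX ≫ pushout.inr (ppDomMapR fV β) (ppDomMapL α fX) ≫ u := by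
    rw [← Category.assoc, ← Category.assoc, pushout.condition]
  have he1 : (fV.left ◁ β.right) ≫ ppInl fV fY ≫ pushout.inl (ppDomMapR fV β) (ppDomMapL α fX) ≫ u
      = (α.left ▷ fX.right) ≫ ppInl fW fX ≫ pushout.inr (ppDomMapR fV β) (ppDomMapL α fX) ≫ u := by
    have h := congrArg (fun t => ppInl fV fX ≫ t) hcmp
    simpa only [ppDomMapR, ppDomMapL, pushout.inl_desc_assoc, Category.assoc] using h
  have he2 : (fV.right ◁ β.left) ≫ ppInr fV fY ≫ pushout.inl (ppDomMapR fV β) (ppDomMapL α fX) ≫ u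
      = (α.right ▷ fX.left) ≫ ppInr fW fX ≫ pushout.inr (ppDomMapR fV β) (ppDomMapL α fX) ≫ u := by
    have h := congrArg (fun t => ppInr fV fX ≫ t) hcmp
    simpa only [ppDomMapR, ppDomMapL, pushout.inr_desc_assoc, Category.assoc] using h
  have heVY : (fV.left ◁ fY.hom) ≫ ppInl fV fY ≫ pushout.inl (ppDomMapR fV β) (ppDomMapL α fX) ≫ u
      = (fV.hom ▷ fY.left) ≫ ppInr fV fY ≫ pushout.inl (ppDomMapR fV β) (ppDomMapL α fX) ≫ u := by
    rw [← Category.assoc, ← Category.assoc, pushout.condition]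
    simp only [Category.assoc]
  have heWX : (fW.left ◁ fX.hom) ≫ ppInl fW fX ≫ pushout.inr (ppDomMapR fV β) (ppDomMapL α fX) ≫ u
      = (fW.hom ▷ fX.left) ≫ ppInr fW fX ≫ pushout.inr (ppDomMapR fV β) (ppDomMapL α fX) ≫ u := by
    rw [← Category.assoc, ← Category.assoc, pushout.condition]
    simp only [Category.assoc]
  have heW : (fW.left ◁ fY.hom) ≫ ppInl fW fY ≫ v
      = (fW.hom ▷ fY.left) ≫ ppInr fW fY ≫ v := by
    rw [← Category.assoc, ← Category.assoc, pushout.condition]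
  have heap : ppInl fV fY ≫ pushout.inl (ppDomMapR fV β) (ppDomMapL α fX) ≫ u ≫ p
      = (α.left ▷ fY.right) ≫ ppInl fW fY ≫ v := by
    have h := congrArg
      (fun t => ppInl fV fY ≫ pushout.inl (ppDomMapR fV β) (ppDomMapL α fX) ≫ t) sq.w
    simp only [zeta, pushout.inl_desc_assoc, Category.assoc] at h
    simp only [ppDomMapL, pushout.map, pushout.inl_desc_assoc, Category.assoc] at h
    exact h
  have hebp : ppInr fV fY ≫ pushout.inl (ppDomMapR fV β) (ppDomMapL α fX) ≫ u ≫ p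
      = (α.right ▷ fY.left) ≫ ppInr fW fY ≫ v := by
    have h := congrArg
      (fun t => ppInr fV fY ≫ pushout.inl (ppDomMapR fV β) (ppDomMapL α fX) ≫ t) sq.w
    simp only [zeta, pushout.inl_desc_assoc, Category.assoc] at h
    simp only [ppDomMapL, pushout.map, pushout.inl_desc_assoc, pushout.inr_desc_assoc,
      Category.assoc] at h
    exact h
  have hecp : ppInl fW fX ≫ pushout.inr (ppDomMapR fV β) (ppDomMapL α fX) ≫ u ≫ p
      = (fW.left ◁ β.right) ≫ ppInl fW fY ≫ v := by
    have h := congrArg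
      (fun t => ppInl fW fX ≫ pushout.inr (ppDomMapR fV β) (ppDomMapL α fX) ≫ t) sq.w
    simp only [zeta, pushout.inr_desc_assoc, Category.assoc] at h
    simp only [ppDomMapR, pushout.map, pushout.inl_desc_assoc, pushout.inr_desc_assoc,
      Category.assoc] at h
    exact h
  have hedp : ppInr fW fX ≫ pushout.inr (ppDomMapR fV β) (ppDomMapL α fX) ≫ u ≫ p
      = (fW.right ◁ β.left) ≫ ppInr fW fY ≫ v := by
    have h := congrArg
      (fun t => ppInr fW fX ≫ pushout.inr (ppDomMapR fV β) (ppDomMapL α fX) ≫ t) sq.w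
    simp only [zeta, pushout.inr_desc_assoc, Category.assoc] at h
    simp only [ppDomMapR, pushout.map, pushout.inr_desc_assoc, Category.assoc] at h
    exact h
  -- Stage 1
  have w₁ : (fV.left ◁ β.left) ≫ (fV.left ◁ fY.hom) ≫ ppInl fV fY ≫
        pushout.inl (ppDomMapR fV β) (ppDomMapL α fX) ≫ u
      = (α.left ▷ fX.left) ≫ (fW.left ◁ fX.hom) ≫ ppInl fW fX ≫
        pushout.inr (ppDomMapR fV β) (ppDomMapL α fX) ≫ u := by
    rw [← MonoidalCategory.whiskerLeft_comp_assoc, Arrow.w β,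
      MonoidalCategory.whiskerLeft_comp_assoc, he1]
    exact whisker_exchange_assoc α.left fX.hom _
  have sq₁ : CommSq
      (pushout.desc
        ((fV.left ◁ fY.hom) ≫ ppInl fV fY ≫ pushout.inl (ppDomMapR fV β) (ppDomMapL α fX) ≫ u)
        ((fW.left ◁ fX.hom) ≫ ppInl fW fX ≫ pushout.inr (ppDomMapR fV β) (ppDomMapL α fX) ≫ u)
        w₁)
      (ppMap (Arrow.mk α.left) (Arrow.mk β.left)) p
      ((fW.left ◁ fY.hom) ≫ ppInl fW fY ≫ v) := by
    constructor
    apply pushout.hom_ext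
    · simp only [Category.assoc, pushout.inl_desc, pushout.inl_desc_assoc, ppMap,
        Arrow.mk_left, Arrow.mk_right, Arrow.mk_hom]
      rw [heap]
      exact whisker_exchange_assoc α.left fY.hom _
    · simp only [Category.assoc, pushout.inr_desc, pushout.inr_desc_assoc, ppMap,
        Arrow.mk_left, Arrow.mk_right, Arrow.mk_hom]
      rw [hecp, ← MonoidalCategory.whiskerLeft_comp_assoc, ← Arrow.w β,
        MonoidalCategory.whiskerLeft_comp_assoc]
  obtain ⟨⟨⟨L00, hL00l, hL00r⟩⟩⟩ := h₁.sq_hasLift sq₁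
  have E1a : (α.left ▷ fY.left) ≫ L00
      = (fV.left ◁ fY.hom) ≫ ppInl fV fY ≫ pushout.inl (ppDomMapR fV β) (ppDomMapL α fX) ≫ u := by
    have h := congrArg (fun t => pushout.inl (fV.left ◁ β.left) (α.left ▷ fX.left) ≫ t) hL00l
    simpa only [ppMap, pushout.inl_desc_assoc, pushout.inl_desc, Category.assoc,
      Arrow.mk_left, Arrow.mk_right, Arrow.mk_hom] using h
  have E1b : (fW.left ◁ β.left) ≫ L00
      = (fW.left ◁ fX.hom) ≫ ppInl fW fX ≫ pushout.inr (ppDomMapR fV β) (ppDomMapL α fX) ≫ u := by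
    have h := congrArg (fun t => pushout.inr (fV.left ◁ β.left) (α.left ▷ fX.left) ≫ t) hL00l
    simpa only [ppMap, pushout.inr_desc_assoc, pushout.inr_desc, Category.assoc,
      Arrow.mk_left, Arrow.mk_right, Arrow.mk_hom] using h
  -- Stage 2
  have hpoW0 := isPushout_whiskerLeft fW.left fX.hom β.left
  have hpoV0 := isPushout_whiskerLeft fV.left fX.hom β.left
  have w₂' : (fW.left ◁ fX.hom) ≫
        (ppInl fW fX ≫ pushout.inr (ppDomMapR fV β) (ppDomMapL α fX) ≫ u)
      = (fW.left ◁ β.left) ≫ L00 := by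
    rw [E1b]
  have w₂ : (fV.left ◁ cornerMap β) ≫
        (ppInl fV fY ≫ pushout.inl (ppDomMapR fV β) (ppDomMapL α fX) ≫ u)
      = (α.left ▷ pushout fX.hom β.left) ≫
        hpoW0.desc (ppInl fW fX ≫ pushout.inr (ppDomMapR fV β) (ppDomMapL α fX) ≫ u) L00 w₂' := by
    apply hpoV0.hom_ext
    · rw [← MonoidalCategory.whiskerLeft_comp_assoc]
      simp only [cornerMap, pushout.inl_desc]
      rw [whisker_exchange_assoc, hpoW0.inl_desc]
      exact he1
    · rw [← MonoidalCategory.whiskerLeft_comp_assoc]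
      simp only [cornerMap, pushout.inr_desc]
      rw [whisker_exchange_assoc, hpoW0.inr_desc]
      exact E1a.symm
  have sq₂ : CommSq
      (pushout.desc
        (ppInl fV fY ≫ pushout.inl (ppDomMapR fV β) (ppDomMapL α fX) ≫ u)
        (hpoW0.desc (ppInl fW fX ≫ pushout.inr (ppDomMapR fV β) (ppDomMapL α fX) ≫ u) L00 w₂')
        w₂)
      (ppMap (Arrow.mk α.left) (Arrow.mk (cornerMap β))) p
      (ppInl fW fY ≫ v) := by
    constructor
    apply pushout.hom_ext
    · simp only [Category.assoc, pushout.inl_desc, pushout.inl_desc_assoc, ppMap,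
        Arrow.mk_left, Arrow.mk_right, Arrow.mk_hom]
      exact heap
    · simp only [Category.assoc, pushout.inr_desc, pushout.inr_desc_assoc, ppMap,
        Arrow.mk_left, Arrow.mk_right, Arrow.mk_hom]
      apply hpoW0.hom_ext
      · rw [hpoW0.inl_desc_assoc, ← MonoidalCategory.whiskerLeft_comp_assoc]
        simp only [cornerMap, pushout.inl_desc]
        simpa only [Category.assoc] using hecp
      · rw [hpoW0.inr_desc_assoc, ← MonoidalCategory.whiskerLeft_comp_assoc]
        simp only [cornerMap, pushout.inr_desc]
        exact hL00r
  obtain ⟨⟨⟨L01, hL01l, hL01r⟩⟩⟩ := h₂.sq_hasLift sq₂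
  have E2a : (α.left ▷ fY.right) ≫ L01
      = ppInl fV fY ≫ pushout.inl (ppDomMapR fV β) (ppDomMapL α fX) ≫ u := by
    have h := congrArg
      (fun t => pushout.inl (fV.left ◁ cornerMap β) (α.left ▷ pushout fX.hom β.left) ≫ t) hL01l
    simpa only [ppMap, pushout.inl_desc_assoc, pushout.inl_desc, Category.assoc,
      Arrow.mk_left, Arrow.mk_right, Arrow.mk_hom] using h
  have E2b1 : (fW.left ◁ β.right) ≫ L01
      = ppInl fW fX ≫ pushout.inr (ppDomMapR fV β) (ppDomMapL α fX) ≫ u := by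
    have h := congrArg
      (fun t => (fW.left ◁ pushout.inl fX.hom β.left) ≫
        pushout.inr (fV.left ◁ cornerMap β) (α.left ▷ pushout fX.hom β.left) ≫ t) hL01l
    simp only [ppMap, pushout.inr_desc_assoc, pushout.inr_desc, Category.assoc,
      Arrow.mk_left, Arrow.mk_right, Arrow.mk_hom, IsPushout.inl_desc] at h
    rw [← MonoidalCategory.whiskerLeft_comp_assoc] at h
    simp only [cornerMap, pushout.inl_desc] at h
    exact h
  have E2b2 : (fW.left ◁ fY.hom) ≫ L01 = L00 := by
    have h := congrArg
      (fun t => (fW.left ◁ pushout.inr fX.hom β.left) ≫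
        pushout.inr (fV.left ◁ cornerMap β) (α.left ▷ pushout fX.hom β.left) ≫ t) hL01l
    simp only [ppMap, pushout.inr_desc_assoc, pushout.inr_desc, Category.assoc,
      Arrow.mk_left, Arrow.mk_right, Arrow.mk_hom, IsPushout.inr_desc] at h
    rw [← MonoidalCategory.whiskerLeft_comp_assoc] at h
    simp only [cornerMap, pushout.inr_desc] at h
    exact h
  -- Stage 3
  have hpoY0 := isPushout_whiskerRight fV.hom α.left fY.left
  have hpoX0 := isPushout_whiskerRight fV.hom α.left fX.left
  have w₃' : (fV.hom ▷ fY.left) ≫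
        (ppInr fV fY ≫ pushout.inl (ppDomMapR fV β) (ppDomMapL α fX) ≫ u)
      = (α.left ▷ fY.left) ≫ L00 := by
    rw [E1a]
    exact heVY.symm
  have w₃ : (pushout fV.hom α.left ◁ β.left) ≫
        hpoY0.desc (ppInr fV fY ≫ pushout.inl (ppDomMapR fV β) (ppDomMapL α fX) ≫ u) L00 w₃'
      = (cornerMap α ▷ fX.left) ≫
        (ppInr fW fX ≫ pushout.inr (ppDomMapR fV β) (ppDomMapL α fX) ≫ u) := by
    apply hpoX0.hom_ext
    · rw [← whisker_exchange_assoc, hpoY0.inl_desc,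
        ← comp_whiskerRight_assoc]
      simp only [cornerMap, pushout.inl_desc]
      exact he2
    · rw [← whisker_exchange_assoc, hpoY0.inr_desc,
        ← comp_whiskerRight_assoc]
      simp only [cornerMap, pushout.inr_desc]
      rw [E1b]
      exact heWX
  have sq₃ : CommSq
      (pushout.desc
        (hpoY0.desc (ppInr fV fY ≫ pushout.inl (ppDomMapR fV β) (ppDomMapL α fX) ≫ u) L00 w₃')
        (ppInr fW fX ≫ pushout.inr (ppDomMapR fV β) (ppDomMapL α fX) ≫ u)
        w₃)
      (ppMap (Arrow.mk (cornerMap α)) (Arrow.mk β.left)) p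
      (ppInr fW fY ≫ v) := by
    constructor
    apply pushout.hom_ext
    · simp only [Category.assoc, pushout.inl_desc, pushout.inl_desc_assoc, ppMap,
        Arrow.mk_left, Arrow.mk_right, Arrow.mk_hom]
      apply hpoY0.hom_ext
      · rw [hpoY0.inl_desc_assoc, ← comp_whiskerRight_assoc]
        simp only [cornerMap, pushout.inl_desc]
        simpa only [Category.assoc] using hebp
      · rw [hpoY0.inr_desc_assoc, ← comp_whiskerRight_assoc]
        simp only [cornerMap, pushout.inr_desc]
        rw [hL00r]
        exact heW
    · simp only [Category.assoc, pushout.inr_desc, pushout.inr_desc_assoc, ppMap,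
        Arrow.mk_left, Arrow.mk_right, Arrow.mk_hom]
      exact hedp
  obtain ⟨⟨⟨L10, hL10l, hL10r⟩⟩⟩ := h₃.sq_hasLift sq₃
  have E3a1 : (α.right ▷ fY.left) ≫ L10
      = ppInr fV fY ≫ pushout.inl (ppDomMapR fV β) (ppDomMapL α fX) ≫ u := by
    have h := congrArg
      (fun t => (pushout.inl fV.hom α.left ▷ fY.left) ≫
        pushout.inl (pushout fV.hom α.left ◁ β.left) (cornerMap α ▷ fX.left) ≫ t) hL10l
    simp only [ppMap, pushout.inl_desc_assoc, pushout.inl_desc, Category.assoc,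
      Arrow.mk_left, Arrow.mk_right, Arrow.mk_hom, IsPushout.inl_desc] at h
    rw [← comp_whiskerRight_assoc] at h
    simp only [cornerMap, pushout.inl_desc] at h
    exact h
  have E3a2 : (fW.hom ▷ fY.left) ≫ L10 = L00 := by
    have h := congrArg
      (fun t => (pushout.inr fV.hom α.left ▷ fY.left) ≫
        pushout.inl (pushout fV.hom α.left ◁ β.left) (cornerMap α ▷ fX.left) ≫ t) hL10l
    simp only [ppMap, pushout.inl_desc_assoc, pushout.inl_desc, Category.assoc,
      Arrow.mk_left, Arrow.mk_right, Arrow.mk_hom, IsPushout.inr_desc] at h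
    rw [← comp_whiskerRight_assoc] at h
    simp only [cornerMap, pushout.inr_desc] at h
    exact h
  have E3b : (fW.right ◁ β.left) ≫ L10
      = ppInr fW fX ≫ pushout.inr (ppDomMapR fV β) (ppDomMapL α fX) ≫ u := by
    have h := congrArg
      (fun t => pushout.inr (pushout fV.hom α.left ◁ β.left) (cornerMap α ▷ fX.left) ≫ t) hL10l
    simpa only [ppMap, pushout.inr_desc_assoc, pushout.inr_desc, Category.assoc,
      Arrow.mk_left, Arrow.mk_right, Arrow.mk_hom] using h
  -- final lift
  have wl : (fW.left ◁ fY.hom) ≫ L01 = (fW.hom ▷ fY.left) ≫ L10 := by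
    rw [E2b2, E3a2]
  refine CommSq.HasLift.mk' ⟨pushout.desc L01 L10 wl, ?_, ?_⟩
  · apply pushout.hom_ext
    · simp only [zeta, pushout.inl_desc_assoc, Category.assoc]
      simp only [ppDomMapL, pushout.map]
      apply pushout.hom_ext
      · simp only [pushout.inl_desc_assoc, pushout.inl_desc, Category.assoc]
        exact E2a
      · simp only [pushout.inr_desc_assoc, pushout.inr_desc, pushout.inl_desc,
          Category.assoc]
        exact E3a1
    · simp only [zeta, pushout.inr_desc_assoc, Category.assoc]
      simp only [ppDomMapR, pushout.map]
      apply pushout.hom_ext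
      · simp only [pushout.inl_desc_assoc, pushout.inl_desc, Category.assoc]
        exact E2b1
      · simp only [pushout.inr_desc_assoc, pushout.inr_desc, Category.assoc]
        exact E3b
  · apply pushout.hom_ext
    · simp only [pushout.inl_desc_assoc, pushout.inl_desc, Category.assoc]
      exact hL01r
    · simp only [pushout.inr_desc_assoc, pushout.inr_desc, Category.assoc]
      exact hL10r

end ZetaLLP

/-- (Lemma 3.3 of White–Yau.) Let `M` be a monoidal model category and let
`α : f_V ⟶ f_W`, `β : f_X ⟶ f_Y` be morphisms in the arrow category. If `α` is a
projective cofibration and `β` is a projective (trivial) cofibration, then the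
`0`-component `ζ` of the pushout product `α □₂ β` is a (trivial) cofibration in `M`;
and the same with the roles reversed: if `α` is a projective (trivial) cofibration and
`β` is a projective cofibration, then `ζ` is a (trivial) cofibration. -/
theorem zeta_is_cofibration
    {M : Type u} [Category.{v} M] [MonoidalCategory M] [SymmetricCategory M]
    [MonoidalClosed M] [HasLimits M] [HasColimits M]
    (S : ModelStructure M) (hS : PushoutProductAxiom S)
    {fV fW fX fY : Arrow M} (α : fV ⟶ fW) (β : fX ⟶ fY) :
    (ProjCof S α → ProjCof S β → S.Cof (zeta α β)) ∧
    (ProjCof S α → ProjTrivCof S β → S.Cof (zeta α β) ∧ S.W (zeta α β)) ∧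
    (ProjTrivCof S α → ProjCof S β → S.Cof (zeta α β) ∧ S.W (zeta α β)) := by
  refine ⟨?_, ?_, ?_⟩
  · intro hα hβ
    apply cof_of_llp S
    intro P Q p hp hwp
    apply zeta_llp α β p
    · exact S.lift_cof_trivFib _ p (hS (Arrow.mk α.left) (Arrow.mk β.left) hα.1 hβ.1).1 hp hwp
    · exact S.lift_cof_trivFib _ p
        (hS (Arrow.mk α.left) (Arrow.mk (cornerMap β)) hα.1 hβ.2).1 hp hwp
    · exact S.lift_cof_trivFib _ p
        (hS (Arrow.mk (cornerMap α)) (Arrow.mk β.left) hα.2 hβ.1).1 hp hwp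
  · intro hα hβ
    apply trivCof_of_llp S
    intro P Q p hp
    apply zeta_llp α β p
    · have h := hS (Arrow.mk α.left) (Arrow.mk β.left) hα.1 hβ.1.1
      exact S.lift_trivCof_fib _ p h.1 (h.2.2 hβ.1.2) hp
    · have h := hS (Arrow.mk α.left) (Arrow.mk (cornerMap β)) hα.1 hβ.2.1
      exact S.lift_trivCof_fib _ p h.1 (h.2.2 hβ.2.2) hp
    · have h := hS (Arrow.mk (cornerMap α)) (Arrow.mk β.left) hα.2 hβ.1.1
      exact S.lift_trivCof_fib _ p h.1 (h.2.2 hβ.1.2) hp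
  · intro hα hβ
    apply trivCof_of_llp S
    intro P Q p hp
    apply zeta_llp α β p
    · have h := hS (Arrow.mk α.left) (Arrow.mk β.left) hα.1.1 hβ.1
      exact S.lift_trivCof_fib _ p h.1 (h.2.1 hα.1.2) hp
    · have h := hS (Arrow.mk α.left) (Arrow.mk (cornerMap β)) hα.1.1 hβ.2
      exact S.lift_trivCof_fib _ p h.1 (h.2.1 hα.1.2) hp
    · have h := hS (Arrow.mk (cornerMap α)) (Arrow.mk β.left) hα.2.1 hβ.1
      exact S.lift_trivCof_fib _ p h.1 (h.2.1 hα.2.2) hp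

end ArrowPaper
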